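/- Let (S,h) be an admissible 4-polarized lattice and Γ ⊆ root₁(S,h) a set with no separating roots. Let c₁,c₂,c₃ ∈ Γ be a triangle and κ := c₁ + c₂ + c₃. Then there is at most one l ∈ Γ ∖ {c₁,c₂,c₃} with ⟨l,κ⟩ ≥ 2 (at most one multiple section of the triangular pencil); moreover, if such an l exists, then ⟨l,m⟩ = 0 for every m ∈ sec₁ ∪ sec₂ ∪ sec₃ (the multiple section is disjoint from every simple section). -/

import Mathlib

/-!
Common definitions: 4-polarized lattices, lines, roots, Fano graphs
(following Degtyarev–Rams, "Counting lines with Vinberg's algorithm").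
-/

namespace K3

variable {S : Type*} [AddCommGroup S] [Module ℤ S]

/-- `root₁(S,h)`: the *lines* of a 4-polarized lattice. -/
def root1 (B : S →ₗ[ℤ] S →ₗ[ℤ] ℤ) (h : S) : Set S :=
  {l : S | B l l = -2 ∧ B l h = 1}

/-- `root₀(S,h)`: the *roots* of a 4-polarized lattice. -/
def root0 (B : S →ₗ[ℤ] S →ₗ[ℤ] ℤ) (h : S) : Set S :=
  {r : S | B r r = -2 ∧ B r h = 0}

/-- `(S,B,h)` is a 4-polarized lattice: `S` is a finitely generated free ℤ-module, `B`
a symmetric bilinear form, `⟨h,h⟩ = 4`, and `⟨v,v⟩ < 0` for nonzero `v ⊥ h`. -/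
structure IsPolarized (B : S →ₗ[ℤ] S →ₗ[ℤ] ℤ) (h : S) : Prop where
  free : Module.Free ℤ S
  finite : Module.Finite ℤ S
  symm : ∀ u v : S, B u v = B v u
  deg : B h h = 4
  hyperbolic : ∀ v : S, v ≠ 0 → B v h = 0 → B v v < 0

/-- Admissibility: there is no `u` with `⟨u,u⟩ = 0` and `⟨u,h⟩ = 2`. -/
def IsAdmissible (B : S →ₗ[ℤ] S →ₗ[ℤ] ℤ) (h : S) : Prop :=
  ¬ ∃ u : S, B u u = 0 ∧ B u h = 2

/-- The E₈ Cartan matrix (Bourbaki numbering of the Dynkin diagram). -/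
def e8Cartan : Matrix (Fin 8) (Fin 8) ℤ :=
  !![2,0,-1,0,0,0,0,0;
     0,2,0,-1,0,0,0,0;
     -1,0,2,-1,0,0,0,0;
     0,-1,-1,2,-1,0,0,0;
     0,0,0,-1,2,-1,0,0;
     0,0,0,0,-1,2,-1,0;
     0,0,0,0,0,-1,2,-1;
     0,0,0,0,0,0,-1,2]

/-- The Gram matrix of `L := E₈ ⊕ E₈ ⊕ U ⊕ U ⊕ U`, where `E₈` is *negative* definite
(Gram matrix the negative of the E₈ Cartan matrix) and `U` has Gram matrix `[[0,1],[1,0]]`. -/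
def LGram : Matrix (Fin 22) (Fin 22) ℤ := fun i j =>
  if hi : (i : ℕ) < 8 then
    (if hj : (j : ℕ) < 8 then -e8Cartan ⟨i, hi⟩ ⟨j, hj⟩ else 0)
  else if hi' : (i : ℕ) < 16 then
    (if hj' : 8 ≤ (j : ℕ) ∧ (j : ℕ) < 16 then
      -e8Cartan ⟨(i : ℕ) - 8, by omega⟩ ⟨(j : ℕ) - 8, by omega⟩ else 0)
  else
    (if 16 ≤ (j : ℕ) ∧ (i : ℕ) / 2 = (j : ℕ) / 2 ∧ i ≠ j then 1 else 0)

/-- A geometric 4-polarized lattice: admissible, even, and admitting a primitive isometric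
embedding into `L = 2E₈ ⊕ 3U` (primitive = the quotient by the image is torsion-free). -/
structure IsGeometric (B : S →ₗ[ℤ] S →ₗ[ℤ] ℤ) (h : S) extends IsPolarized B h : Prop where
  admissible : IsAdmissible B h
  even : ∀ v : S, Even (B v v)
  embeds : ∃ f : S →ₗ[ℤ] (Fin 22 → ℤ), Function.Injective f ∧
    (∀ u v : S, B u v = ∑ i, ∑ j, f u i * LGram i j * f v j) ∧
    (∀ (x : Fin 22 → ℤ) (n : ℤ), n ≠ 0 → n • x ∈ LinearMap.range f →
      x ∈ LinearMap.range f)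

/-- A ℤ-linear functional is *Weyl-generic* if it does not vanish on any root. -/
def WeylGeneric (B : S →ₗ[ℤ] S →ₗ[ℤ] ℤ) (h : S) (φ : S →ₗ[ℤ] ℤ) : Prop :=
  ∀ r ∈ root0 B h, φ r ≠ 0

/-- The vertex set of the Fano graph `Fn_φ(S,h)`. -/
def fanoVerts (B : S →ₗ[ℤ] S →ₗ[ℤ] ℤ) (h : S) (φ : S →ₗ[ℤ] ℤ) : Set S :=
  {l ∈ root1 B h | ∀ r ∈ root0 B h, 0 < φ r → 0 ≤ B l r}

/-- The set `Γ` together with `h` spans `S ⊗ ℚ`; since `S` is free, this is equivalent to: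
every `s : S` has a nonzero integer multiple in the ℤ-span of `Γ ∪ {h}`. -/
def QSpannedByLines (Γ : Set S) (h : S) : Prop :=
  ∀ s : S, ∃ n : ℤ, n ≠ 0 ∧ n • s ∈ Submodule.span ℤ (Γ ∪ {h})

/-- The Fano graph as a simple graph on `Γ`: distinct `u, v` adjacent iff `⟨u,v⟩ = 1`. -/
def fanoGraph (B : S →ₗ[ℤ] S →ₗ[ℤ] ℤ) (Γ : Set S) : SimpleGraph Γ where
  Adj u v := u ≠ v ∧ B u.1 v.1 = 1 ∧ B v.1 u.1 = 1
  symm := by refine ⟨?_⟩; intro u v hadj; exact ⟨hadj.1.symm, hadj.2.2, hadj.2.1⟩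
  loopless := by refine ⟨?_⟩; intro u hadj; exact hadj.1 rfl

/-- `Γ` has no separating roots: no root is positive on one element of `Γ` and negative
on another. -/
def NoSeparatingRoots (B : S →ₗ[ℤ] S →ₗ[ℤ] ℤ) (h : S) (Γ : Set S) : Prop :=
  ¬ ∃ r ∈ root0 B h, ∃ u ∈ Γ, ∃ v ∈ Γ, 0 < B r u ∧ B r v < 0

/-- A triangle in a set `Γ` of lines: three distinct elements pairwise of product `1`. -/
def IsTriangle (B : S →ₗ[ℤ] S →ₗ[ℤ] ℤ) (Γ : Set S) (c₁ c₂ c₃ : S) : Prop :=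
  c₁ ∈ Γ ∧ c₂ ∈ Γ ∧ c₃ ∈ Γ ∧ c₁ ≠ c₂ ∧ c₁ ≠ c₃ ∧ c₂ ≠ c₃ ∧
    B c₁ c₂ = 1 ∧ B c₁ c₃ = 1 ∧ B c₂ c₃ = 1

/-- Simple sections through `a` of the triangle `(a,b,c)`:
`sec a := {l ∈ Γ : ⟨l,a⟩ = 1, ⟨l,b⟩ = ⟨l,c⟩ = 0}`. -/
def sec (B : S →ₗ[ℤ] S →ₗ[ℤ] ℤ) (Γ : Set S) (a b c : S) : Set S :=
  {l ∈ Γ | B l a = 1 ∧ B l b = 0 ∧ B l c = 0}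

/-- The pencil of a triangle `(c₁,c₂,c₃)` in `Γ`. -/
def pencil (B : S →ₗ[ℤ] S →ₗ[ℤ] ℤ) (Γ : Set S) (c₁ c₂ c₃ : S) : Set S :=
  {c₁, c₂, c₃} ∪ {l ∈ Γ | B l c₁ = 0 ∧ B l c₂ = 0 ∧ B l c₃ = 0}

end K3

namespace K3

/-- For two distinct lines in a set with no separating roots in an admissible
4-polarized lattice, the product is `0` or `1`. -/
lemma pair_bound {S : Type*} [AddCommGroup S] [Module ℤ S]
    (B : S →ₗ[ℤ] S →ₗ[ℤ] ℤ) (h : S)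
    (hpol : IsPolarized B h) (hadm : IsAdmissible B h)
    (Γ : Set S) (hΓ : Γ ⊆ root1 B h) (hsep : NoSeparatingRoots B h Γ)
    {u v : S} (hu : u ∈ Γ) (hv : v ∈ Γ) (huv : u ≠ v) :
    0 ≤ B u v ∧ B u v ≤ 1 := by
  obtain ⟨huu, huh⟩ := hΓ hu
  obtain ⟨hvv, hvh⟩ := hΓ hv
  have hs := hpol.symm u v
  have hsu := hpol.symm u h
  have hsv := hpol.symm v h
  have hd := hpol.deg
  constructor
  · by_contra hneg
    push_neg at hneg
    have hcase : B u v = -1 ∨ B u v ≤ -2 := by omega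
    rcases hcase with h1 | h2
    · exact hsep ⟨u - v,
        ⟨by simp only [map_sub, LinearMap.sub_apply]; linarith,
         by simp only [map_sub, LinearMap.sub_apply]; linarith⟩,
        v, hv, u, hu,
        by simp only [map_sub, LinearMap.sub_apply]; linarith,
        by simp only [map_sub, LinearMap.sub_apply]; linarith⟩
    · have hne : u - v ≠ 0 := sub_ne_zero.mpr huv
      have hperp : B (u - v) h = 0 := by
        simp only [map_sub, LinearMap.sub_apply]; linarith
      have hhyp := hpol.hyperbolic _ hne hperp
      simp only [map_sub, LinearMap.sub_apply] at hhyp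
      linarith
  · by_contra hbig
    push_neg at hbig
    have hcase : B u v = 2 ∨ 3 ≤ B u v := by omega
    rcases hcase with h1 | h2
    · exact hadm ⟨u + v,
        by simp only [map_add, LinearMap.add_apply]; linarith,
        by simp only [map_add, LinearMap.add_apply]; linarith⟩
    · have hperp : B (u + v + u + v - h) h = 0 := by
        simp only [map_add, map_sub, LinearMap.add_apply, LinearMap.sub_apply]
        linarith
      have hne : u + v + u + v - h ≠ 0 := by
        intro h0
        have h00 : B (u + v + u + v - h) (u + v + u + v - h) = 0 := by
          rw [h0]; simp
        simp only [map_add, map_sub, LinearMap.add_apply, LinearMap.sub_apply] at h00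
        linarith
      have hhyp := hpol.hyperbolic _ hne hperp
      simp only [map_add, map_sub, LinearMap.add_apply, LinearMap.sub_apply] at hhyp
      linarith

/-- Orthogonality of a multiple section to a simple section, in a form symmetric in
the triangle. -/
lemma orth_aux {S : Type*} [AddCommGroup S] [Module ℤ S]
    (B : S →ₗ[ℤ] S →ₗ[ℤ] ℤ) (h : S)
    (hpol : IsPolarized B h) (hadm : IsAdmissible B h)
    (Γ : Set S) (hΓ : Γ ⊆ root1 B h) (hsep : NoSeparatingRoots B h Γ)
    {a b c : S} (ha : a ∈ Γ) (hb : b ∈ Γ) (hc : c ∈ Γ)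
    (dab : a ≠ b) (dac : a ≠ c) (dbc : b ≠ c)
    (eab : B a b = 1) (eac : B a c = 1) (ebc : B b c = 1)
    {l : S} (hl : l ∈ Γ) (hla : l ≠ a) (hlb : l ≠ b) (hlc : l ≠ c)
    (hκ : 2 ≤ B l a + B l b + B l c)
    {m : S} (hm : m ∈ Γ) (hma : B m a = 1) (hmb : B m b = 0) (hmc : B m c = 0) :
    B l m = 0 := by
  obtain ⟨haa, hah⟩ := hΓ ha
  obtain ⟨hbb, hbh⟩ := hΓ hb
  obtain ⟨hcc, hch⟩ := hΓ hc
  obtain ⟨hll, hlh⟩ := hΓ hl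
  obtain ⟨hmm, hmh⟩ := hΓ hm
  have hd := hpol.deg
  -- symmetry facts
  have sab := hpol.symm a b; have sac := hpol.symm a c; have sbc := hpol.symm b c
  have sla := hpol.symm l a; have slb := hpol.symm l b; have slc := hpol.symm l c
  have sma := hpol.symm m a; have smb := hpol.symm m b; have smc := hpol.symm m c
  have slm := hpol.symm l m
  have sah := hpol.symm a h; have sbh := hpol.symm b h; have sch := hpol.symm c h
  have slh := hpol.symm l h; have smh := hpol.symm m h
  have hml : m ≠ l := by
    intro he; rw [he] at hma hmb hmc; omega
  -- bounds on products
  obtain ⟨hx1, hx1'⟩ := pair_bound B h hpol hadm Γ hΓ hsep hl ha hla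
  obtain ⟨hx2, hx2'⟩ := pair_bound B h hpol hadm Γ hΓ hsep hl hb hlb
  obtain ⟨hx3, hx3'⟩ := pair_bound B h hpol hadm Γ hΓ hsep hl hc hlc
  obtain ⟨hlm0, hlm1⟩ := pair_bound B h hpol hadm Γ hΓ hsep hl hm (Ne.symm hml)
  by_contra hne0
  have hlm : B l m = 1 := by omega
  have hcase : B l a + B l b + B l c = 2 ∨ B l a + B l b + B l c = 3 := by omega
  rcases hcase with ht | ht
  · -- κ·l = 2 : r = h - a - b - c - l is a root separating l from m
    exact hsep ⟨h - a - b - c - l,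
      ⟨by simp only [map_sub, LinearMap.sub_apply]; linarith,
       by simp only [map_sub, LinearMap.sub_apply]; linarith⟩,
      l, hl, m, hm,
      by simp only [map_sub, LinearMap.sub_apply]; linarith,
      by simp only [map_sub, LinearMap.sub_apply]; linarith⟩
  · -- κ·l = 3 : v = h - a - b - c - l is nonzero, ⊥ h, of square 0
    have hvh : B (h - a - b - c - l) h = 0 := by
      simp only [map_sub, LinearMap.sub_apply]; linarith
    have hneq : h - a - b - c - l ≠ 0 := by
      intro h0
      have h00 : B (h - a - b - c - l) m = 0 := by rw [h0]; simp
      simp only [map_sub, LinearMap.sub_apply] at h00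
      linarith
    have hhyp := hpol.hyperbolic _ hneq hvh
    simp only [map_sub, LinearMap.sub_apply] at hhyp
    linarith

/-- Lemma 3.1. In an admissible 4-polarized lattice, a set of lines `Γ`
with no separating roots and a triangle `c₁,c₂,c₃ ∈ Γ`: at most one multiple section, i.e.
at most one `l ∈ Γ ∖ {c₁,c₂,c₃}` with `⟨l, κ⟩ ≥ 2` where `κ = c₁+c₂+c₃`; moreover such an
`l` is orthogonal to every simple section in `sec₁ ∪ sec₂ ∪ sec₃`. -/
theorem at_most_one_multiple_section
    {S : Type*} [AddCommGroup S] [Module ℤ S]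
    (B : S →ₗ[ℤ] S →ₗ[ℤ] ℤ) (h : S)
    (hpol : IsPolarized B h) (hadm : IsAdmissible B h)
    (Γ : Set S) (hΓ : Γ ⊆ root1 B h)
    (hsep : NoSeparatingRoots B h Γ)
    (c₁ c₂ c₃ : S) (htri : IsTriangle B Γ c₁ c₂ c₃) :
    (∀ l ∈ Γ, ∀ l' ∈ Γ, l ∉ ({c₁, c₂, c₃} : Set S) → l' ∉ ({c₁, c₂, c₃} : Set S) →
      2 ≤ B l (c₁ + c₂ + c₃) → 2 ≤ B l' (c₁ + c₂ + c₃) → l = l') ∧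
    (∀ l ∈ Γ, l ∉ ({c₁, c₂, c₃} : Set S) → 2 ≤ B l (c₁ + c₂ + c₃) →
      ∀ m ∈ sec B Γ c₁ c₂ c₃ ∪ sec B Γ c₂ c₁ c₃ ∪ sec B Γ c₃ c₁ c₂, B l m = 0) := by
  obtain ⟨hm1, hm2, hm3, d12, d13, d23, e12, e13, e23⟩ := htri
  obtain ⟨h11, h1h⟩ := hΓ hm1
  obtain ⟨h22, h2h⟩ := hΓ hm2
  obtain ⟨h33, h3h⟩ := hΓ hm3
  have hd := hpol.deg
  have s12 := hpol.symm c₁ c₂; have s13 := hpol.symm c₁ c₃; have s23 := hpol.symm c₂ c₃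
  have s1h := hpol.symm c₁ h; have s2h := hpol.symm c₂ h; have s3h := hpol.symm c₃ h
  constructor
  · intro l hl l' hl' hlni hl'ni hκl hκl'
    by_contra hne
    simp only [Set.mem_insert_iff, Set.mem_singleton_iff, not_or] at hlni hl'ni
    obtain ⟨hla, hlb, hlc⟩ := hlni
    obtain ⟨hl'a, hl'b, hl'c⟩ := hl'ni
    obtain ⟨hll, hlh⟩ := hΓ hl
    obtain ⟨hl'l', hl'h⟩ := hΓ hl'
    have sl1 := hpol.symm l c₁; have sl2 := hpol.symm l c₂; have sl3 := hpol.symm l c₃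
    have sl'1 := hpol.symm l' c₁; have sl'2 := hpol.symm l' c₂; have sl'3 := hpol.symm l' c₃
    have sll' := hpol.symm l l'
    have slh := hpol.symm l h; have sl'h := hpol.symm l' h
    obtain ⟨hx1, hx1'⟩ := pair_bound B h hpol hadm Γ hΓ hsep hl hm1 hla
    obtain ⟨hx2, hx2'⟩ := pair_bound B h hpol hadm Γ hΓ hsep hl hm2 hlb
    obtain ⟨hx3, hx3'⟩ := pair_bound B h hpol hadm Γ hΓ hsep hl hm3 hlc
    obtain ⟨hy1, hy1'⟩ := pair_bound B h hpol hadm Γ hΓ hsep hl' hm1 hl'a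
    obtain ⟨hy2, hy2'⟩ := pair_bound B h hpol hadm Γ hΓ hsep hl' hm2 hl'b
    obtain ⟨hy3, hy3'⟩ := pair_bound B h hpol hadm Γ hΓ hsep hl' hm3 hl'c
    obtain ⟨hc0, hc1⟩ := pair_bound B h hpol hadm Γ hΓ hsep hl hl' hne
    simp only [map_add, LinearMap.add_apply] at hκl hκl'
    have hcase : B l c₁ + B l c₂ + B l c₃ = 2 ∨
        (B l' c₁ + B l' c₂ + B l' c₃ = 2 ∧ 3 ≤ B l c₁ + B l c₂ + B l c₃) ∨
        (3 ≤ B l c₁ + B l c₂ + B l c₃ ∧ 3 ≤ B l' c₁ + B l' c₂ + B l' c₃) := by omega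
    rcases hcase with ht | ⟨ht, ht'⟩ | ⟨ht, ht'⟩
    · -- κ·l = 2 : r = h - c₁ - c₂ - c₃ - l separates l from l'
      exact hsep ⟨h - c₁ - c₂ - c₃ - l,
        ⟨by simp only [map_sub, LinearMap.sub_apply]; linarith,
         by simp only [map_sub, LinearMap.sub_apply]; linarith⟩,
        l, hl, l', hl',
        by simp only [map_sub, LinearMap.sub_apply]; linarith,
        by simp only [map_sub, LinearMap.sub_apply]; linarith⟩
    · -- κ·l' = 2, κ·l = 3 : r = h - c₁ - c₂ - c₃ - l' separates l' from l
      exact hsep ⟨h - c₁ - c₂ - c₃ - l',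
        ⟨by simp only [map_sub, LinearMap.sub_apply]; linarith,
         by simp only [map_sub, LinearMap.sub_apply]; linarith⟩,
        l', hl', l, hl,
        by simp only [map_sub, LinearMap.sub_apply]; linarith,
        by simp only [map_sub, LinearMap.sub_apply]; linarith⟩
    · -- κ·l = κ·l' = 3 : v = h - c₁ - c₂ - c₃ - l is nonzero, ⊥ h, of square 0
      have hvh : B (h - c₁ - c₂ - c₃ - l) h = 0 := by
        simp only [map_sub, LinearMap.sub_apply]; linarith
      have hneq : h - c₁ - c₂ - c₃ - l ≠ 0 := by
        intro h0
        have h00 : B (h - c₁ - c₂ - c₃ - l) l' = 0 := by rw [h0]; simp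
        simp only [map_sub, LinearMap.sub_apply] at h00
        linarith
      have hhyp := hpol.hyperbolic _ hneq hvh
      simp only [map_sub, LinearMap.sub_apply] at hhyp
      linarith
  · intro l hl hlni hκl m hm
    simp only [Set.mem_insert_iff, Set.mem_singleton_iff, not_or] at hlni
    obtain ⟨hla, hlb, hlc⟩ := hlni
    simp only [map_add, LinearMap.add_apply] at hκl
    rcases hm with (hm | hm) | hm
    · obtain ⟨hmΓ, hma, hmb, hmc⟩ := hm
      exact orth_aux B h hpol hadm Γ hΓ hsep hm1 hm2 hm3 d12 d13 d23 e12 e13 e23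
        hl hla hlb hlc (by linarith) hmΓ hma hmb hmc
    · obtain ⟨hmΓ, hma, hmb, hmc⟩ := hm
      exact orth_aux B h hpol hadm Γ hΓ hsep hm2 hm1 hm3 d12.symm d23 d13
        (by rw [hpol.symm]; exact e12) e23 e13
        hl hlb hla hlc (by linarith) hmΓ hma hmb hmc
    · obtain ⟨hmΓ, hma, hmb, hmc⟩ := hm
      exact orth_aux B h hpol hadm Γ hΓ hsep hm3 hm1 hm2 d13.symm d23.symm d12
        (by rw [hpol.symm]; exact e13) (by rw [hpol.symm]; exact e23) e12
        hl hlc hla hlb (by linarith) hmΓ hma hmb hmc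

end K3
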